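/- Let p, q ≥ 2 with gcd(p,q) = 1, and suppose the system p²|x|^{2p} = q²|y|^{2q} = |x^p + y^q|² together with x·conj(y)·|x^p+y^q|² = pq|xy|²·conj(x)^{p-1}·y^{q-1} has a solution with x ≠ 0 and y ≠ 0. Then p = q = 2. -/

import Mathlib

open Complex

/-- if the simplified critical-point system of
`conj(xy)(x^p+y^q)` has a solution with `x ≠ 0 ≠ y`, then `p = q = 2`. -/
theorem stmt2 (p q : ℕ) (hp : 2 ≤ p) (hq : 2 ≤ q) (hpq : Nat.gcd p q = 1)
    (x y : ℂ) (hx : x ≠ 0) (hy : y ≠ 0)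
    (h1 : (p : ℝ)^2 * ‖x‖^(2*p) = (q : ℝ)^2 * ‖y‖^(2*q))
    (h2 : (q : ℝ)^2 * ‖y‖^(2*q) = ‖x^p + y^q‖^2)
    (h3 : x * (starRingEnd ℂ) y * ((‖x^p + y^q‖^2 : ℝ) : ℂ)
        = (p : ℂ) * q * ((‖x*y‖^2 : ℝ) : ℂ)
          * ((starRingEnd ℂ) x)^(p-1) * y^(q-1)) :
    p = 2 ∧ q = 2 := by
  clear h3 hpq
  set A : ℝ := ‖x‖ ^ p with hAdef
  set B : ℝ := ‖y‖ ^ q with hBdef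
  set S : ℝ := ‖x ^ p + y ^ q‖ with hSdef
  have hA : 0 < A := by
    have := norm_pos_iff.mpr hx; positivity
  have hB : 0 < B := by
    have := norm_pos_iff.mpr hy; positivity
  have hS0 : 0 ≤ S := norm_nonneg _
  have hxA : ‖x‖ ^ (2 * p) = A ^ 2 := by
    rw [hAdef, ← pow_mul, Nat.mul_comm]
  have hyB : ‖y‖ ^ (2 * q) = B ^ 2 := by
    rw [hBdef, ← pow_mul, Nat.mul_comm]
  rw [hxA, hyB] at h1
  rw [hyB] at h2
  have hpA : (p : ℝ) * A = S := by
    have hsq : ((p : ℝ) * A) ^ 2 = S ^ 2 := by rw [mul_pow]; rw [h1, h2]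
    have hp0 : 0 ≤ (p : ℝ) * A := by positivity
    nlinarith [hsq, hp0, hS0]
  have hqB : (q : ℝ) * B = S := by
    have hsq : ((q : ℝ) * B) ^ 2 = S ^ 2 := by rw [mul_pow]; rw [h2]
    have hq0 : 0 ≤ (q : ℝ) * B := by positivity
    nlinarith [hsq, hq0, hS0]
  have htri : S ≤ A + B := by
    calc S = ‖x ^ p + y ^ q‖ := rfl
    _ ≤ ‖x ^ p‖ + ‖y ^ q‖ := norm_add_le _ _
    _ = A + B := by rw [norm_pow, norm_pow]
  have hp2 : (2 : ℝ) ≤ p := by exact_mod_cast hp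
  have hq2 : (2 : ℝ) ≤ q := by exact_mod_cast hq
  -- 2A ≤ pA = S ≤ A + B  ⇒  A ≤ B, and symmetrically B ≤ A
  have h2A : 2 * A ≤ (p : ℝ) * A := mul_le_mul_of_nonneg_right hp2 hA.le
  have h2B : 2 * B ≤ (q : ℝ) * B := mul_le_mul_of_nonneg_right hq2 hB.le
  have hAB : A ≤ B := by linarith
  have hBA : B ≤ A := by linarith
  have hpAle : (p : ℝ) * A ≤ 2 * A := by linarith
  have hqBle : (q : ℝ) * B ≤ 2 * B := by linarith
  have hple : (p : ℝ) ≤ 2 := le_of_mul_le_mul_right (by linarith) hA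
  have hqle : (q : ℝ) ≤ 2 := le_of_mul_le_mul_right (by linarith) hB
  have hp' : p ≤ 2 := by exact_mod_cast hple
  have hq' : q ≤ 2 := by exact_mod_cast hqle
  exact ⟨le_antisymm hp' hp, le_antisymm hq' hq⟩
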